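/- For n ≥ 1, the number of proper partitions of the complete bipartite graph K_{n,n} into exactly 4 independent sets equals 2 − 2^{n+1} + 3^{n−1} + 4^{n−1}, i.e., the sum over j = 1 to 3 of S(n,j)·S(n,4−j) equals 2 − 2^{n+1} + 3^{n−1} + 4^{n−1}. -/

import Mathlib

open Finset

def stirling : ℕ → ℕ → ℕ
  | 0, 0 => 1
  | 0, _ + 1 => 0
  | _ + 1, 0 => 0
  | n + 1, k + 1 => (k + 1) * stirling n (k + 1) + stirling n k

namespace PartAux

variable {α : Type*} [DecidableEq α] {a : α} {t : Finset α}

/-- Remove element `a` from a partition of `insert a t`. -/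
def restrict (ha : a ∉ t) (P : Finpartition (insert a t)) : Finpartition t :=
  (P.avoid {a}).copy (by rw [Finset.sdiff_singleton_eq_erase, Finset.erase_insert ha])

lemma mem_restrict (ha : a ∉ t) (P : Finpartition (insert a t)) {q : Finset α} :
    q ∈ (restrict ha P).parts ↔ ∃ d ∈ P.parts, ¬ d ⊆ {a} ∧ d \ {a} = q := by
  simp [restrict, Finpartition.copy, Finpartition.mem_avoid, Finset.le_eq_subset]

lemma part_a_mem (ha : a ∉ t) (P : Finpartition (insert a t)) : P.part a ∈ P.parts :=
  P.part_mem.2 (mem_insert_self a t)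

lemma a_mem_part (ha : a ∉ t) (P : Finpartition (insert a t)) : a ∈ P.part a :=
  P.mem_part (mem_insert_self a t)

lemma not_mem_of_ne_part (ha : a ∉ t) (P : Finpartition (insert a t)) {d : Finset α}
    (hd : d ∈ P.parts) (hne : d ≠ P.part a) : a ∉ d := fun h =>
  hne (by rw [P.part_eq_of_mem hd h])

lemma subset_singleton_iff (ha : a ∉ t) (P : Finpartition (insert a t)) {d : Finset α}
    (hd : d ∈ P.parts) : d ⊆ {a} ↔ d = {a} := by
  constructor
  · intro h
    obtain ⟨x, hx⟩ := P.nonempty_of_mem_parts hd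
    have := h hx
    rw [mem_singleton] at this
    subst this
    exact Finset.eq_singleton_iff_nonempty_unique_mem.2 ⟨⟨x, hx⟩, fun y hy => by
      have := h hy; rwa [mem_singleton] at this⟩
  · rintro rfl; rfl

lemma restrict_parts₁ (ha : a ∉ t) (P : Finpartition (insert a t)) (h : P.part a = {a}) :
    (restrict ha P).parts = P.parts.erase {a} := by
  ext q
  rw [mem_restrict ha P, mem_erase]
  constructor
  · rintro ⟨d, hd, hsub, rfl⟩
    rw [subset_singleton_iff ha P hd] at hsub
    have hne : d ≠ P.part a := fun hh => hsub (hh.trans h)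
    have han : a ∉ d := not_mem_of_ne_part ha P hd hne
    rw [Finset.sdiff_singleton_eq_erase, Finset.erase_eq_of_notMem han]
    exact ⟨fun hh => hsub hh, hd⟩
  · rintro ⟨hne, hq⟩
    have hne' : q ≠ P.part a := fun hh => hne (hh.trans h)
    have han : a ∉ q := not_mem_of_ne_part ha P hq hne'
    refine ⟨q, hq, ?_, ?_⟩
    · rw [subset_singleton_iff ha P hq]; exact hne
    · rw [Finset.sdiff_singleton_eq_erase, Finset.erase_eq_of_notMem han]

lemma part_not_subset (ha : a ∉ t) (P : Finpartition (insert a t)) (h : P.part a ≠ {a}) :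
    ¬ P.part a ⊆ {a} := by
  rw [subset_singleton_iff ha P (part_a_mem ha P)]; exact h

lemma erase_part_not_mem (ha : a ∉ t) (P : Finpartition (insert a t)) (h : P.part a ≠ {a}) :
    (P.part a).erase a ∉ P.parts := by
  intro hmem
  obtain ⟨x, hx, hxa⟩ := Finset.not_subset.1 (part_not_subset ha P h)
  rw [mem_singleton] at hxa
  have hx' : x ∈ (P.part a).erase a := mem_erase.2 ⟨hxa, hx⟩
  have := P.eq_of_mem_parts hmem (part_a_mem ha P) hx' hx
  exact (Finset.notMem_erase a _) (this ▸ a_mem_part ha P)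

lemma restrict_parts₂ (ha : a ∉ t) (P : Finpartition (insert a t)) (h : P.part a ≠ {a}) :
    (restrict ha P).parts = insert ((P.part a).erase a) (P.parts.erase (P.part a)) := by
  ext q
  rw [mem_restrict ha P, mem_insert, mem_erase]
  constructor
  · rintro ⟨d, hd, hsub, rfl⟩
    by_cases hda : d = P.part a
    · subst hda
      left; rw [Finset.sdiff_singleton_eq_erase]
    · right
      have han : a ∉ d := not_mem_of_ne_part ha P hd hda
      rw [Finset.sdiff_singleton_eq_erase, Finset.erase_eq_of_notMem han]
      exact ⟨hda, hd⟩
  · rintro (rfl | ⟨hne, hq⟩)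
    · exact ⟨P.part a, part_a_mem ha P, part_not_subset ha P h,
        by rw [Finset.sdiff_singleton_eq_erase]⟩
    · have han : a ∉ q := not_mem_of_ne_part ha P hq hne
      refine ⟨q, hq, ?_, by rw [Finset.sdiff_singleton_eq_erase, Finset.erase_eq_of_notMem han]⟩
      rw [subset_singleton_iff ha P hq]
      intro hh; subst hh; exact han (mem_singleton_self a)

/-- Add `a` to the part `p` of a partition of `t`. -/
def addPart (ha : a ∉ t) (Q : Finpartition t) (p : Finset α) (hp : p ∈ Q.parts) :
    Finpartition (insert a t) where
  parts := insert (insert a p) (Q.parts.erase p)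
  supIndep := by
    rw [Finset.supIndep_iff_pairwiseDisjoint, coe_insert]
    refine (Q.disjoint.subset ?_).insert ?_
    · exact_mod_cast Finset.erase_subset p Q.parts
    · intro d hd hne
      rw [Finset.mem_coe, mem_erase] at hd
      rw [Finset.disjoint_left]
      intro x hx hxd
      simp only [id_eq] at hx hxd
      rw [mem_insert] at hx
      rcases hx with rfl | hx
      · exact ha (Q.le hd.2 hxd)
      · exact hd.1 (Q.eq_of_mem_parts hd.2 hp hxd hx)
  sup_parts := by
    rw [sup_insert, id]
    have h1 : p ∪ (Q.parts.erase p).sup id = t := by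
      conv_rhs => rw [← Q.sup_parts, ← Finset.insert_erase hp]
      rw [sup_insert, id, Finset.sup_eq_union]
    rw [Finset.sup_eq_union, Finset.insert_union, h1]
  bot_notMem := by
    rw [mem_insert]
    rintro (h | h)
    · exact (Finset.insert_nonempty a p).ne_empty h.symm
    · exact Q.bot_notMem (Finset.erase_subset _ _ h)

lemma insert_a_not_mem_parts (ha : a ∉ t) (Q : Finpartition t) (p : Finset α) :
    insert a p ∉ Q.parts := fun h => ha (Q.le h (mem_insert_self a p))

lemma card_addPart (ha : a ∉ t) (Q : Finpartition t) (p : Finset α) (hp : p ∈ Q.parts) :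
    (addPart ha Q p hp).parts.card = Q.parts.card := by
  show (insert (insert a p) (Q.parts.erase p)).card = _
  rw [card_insert_of_notMem fun h => insert_a_not_mem_parts ha Q p (Finset.erase_subset _ _ h),
    card_erase_of_mem hp]
  have : 1 ≤ Q.parts.card := Finset.card_pos.2 ⟨p, hp⟩
  omega

/-- Extend a partition of `t` by the new singleton part `{a}`. -/
def extSingle (ha : a ∉ t) (Q : Finpartition t) : Finpartition (insert a t) :=
  Q.extend (b := {a}) (by simp [Finset.bot_eq_empty])
    (Finset.disjoint_singleton_right.2 ha)
    (by rw [Finset.sup_eq_union, Finset.union_comm, ← Finset.insert_eq])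

lemma card_extSingle (ha : a ∉ t) (Q : Finpartition t) :
    (extSingle ha Q).parts.card = Q.parts.card + 1 :=
  Finpartition.card_extend _ _ _

lemma singleton_not_mem (ha : a ∉ t) (Q : Finpartition t) : ({a} : Finset α) ∉ Q.parts :=
  fun h => ha (Q.le h (mem_singleton_self a))

end PartAux

namespace PartAux

variable {α : Type*} [DecidableEq α] {a : α} {t : Finset α}

lemma parts_extSingle (ha : a ∉ t) (Q : Finpartition t) :
    (extSingle ha Q).parts = insert {a} Q.parts := rfl

lemma parts_addPart (ha : a ∉ t) (Q : Finpartition t) (p : Finset α) (hp : p ∈ Q.parts) :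
    (addPart ha Q p hp).parts = insert (insert a p) (Q.parts.erase p) := rfl

/-- Forward map. -/
def fwd (ha : a ∉ t) (k : ℕ) (P : {P : Finpartition (insert a t) // P.parts.card = k + 1}) :
    {Q : Finpartition t // Q.parts.card = k} ⊕
      {x : Finpartition t × Finset α // x.1.parts.card = k + 1 ∧ x.2 ∈ x.1.parts} :=
  if h : P.1.part a = {a} then
    Sum.inl ⟨restrict ha P.1, by
      rw [restrict_parts₁ ha P.1 h, card_erase_of_mem (h ▸ part_a_mem ha P.1), P.2]
      omega⟩
  else
    Sum.inr ⟨(restrict ha P.1, (P.1.part a).erase a), by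
      constructor
      · have h1 : (P.1.part a).erase a ∉ P.1.parts.erase (P.1.part a) :=
          fun hh => erase_part_not_mem ha P.1 h (Finset.erase_subset _ _ hh)
        rw [restrict_parts₂ ha P.1 h, card_insert_of_notMem h1,
          card_erase_of_mem (part_a_mem ha P.1), P.2]
        omega
      · rw [restrict_parts₂ ha P.1 h]; exact mem_insert_self _ _⟩

/-- Backward map. -/
def bwd (ha : a ∉ t) (k : ℕ) :
    ({Q : Finpartition t // Q.parts.card = k} ⊕
      {x : Finpartition t × Finset α // x.1.parts.card = k + 1 ∧ x.2 ∈ x.1.parts}) →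
    {P : Finpartition (insert a t) // P.parts.card = k + 1}
  | Sum.inl Q => ⟨extSingle ha Q.1, by rw [card_extSingle, Q.2]⟩
  | Sum.inr x => ⟨addPart ha x.1.1 x.1.2 x.2.2, by rw [card_addPart, x.2.1]⟩

lemma bwd_fwd (ha : a ∉ t) (k : ℕ) (P : {P : Finpartition (insert a t) // P.parts.card = k + 1}) :
    bwd ha k (fwd ha k P) = P := by
  obtain ⟨P, hP⟩ := P
  unfold fwd
  split_ifs with h
  · apply Subtype.ext
    apply Finpartition.ext
    show insert {a} (restrict ha P).parts = P.parts
    rw [restrict_parts₁ ha P h, Finset.insert_erase (h ▸ part_a_mem ha P)]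
  · apply Subtype.ext
    apply Finpartition.ext
    show insert (insert a ((P.part a).erase a)) ((restrict ha P).parts.erase ((P.part a).erase a))
        = P.parts
    rw [Finset.insert_erase (a_mem_part ha P), restrict_parts₂ ha P h,
      Finset.erase_insert (fun hh => erase_part_not_mem ha P h (Finset.erase_subset _ _ hh)),
      Finset.insert_erase (part_a_mem ha P)]

lemma fwd_bwd (ha : a ∉ t) (k : ℕ)
    (x : {Q : Finpartition t // Q.parts.card = k} ⊕
      {x : Finpartition t × Finset α // x.1.parts.card = k + 1 ∧ x.2 ∈ x.1.parts}) :
    fwd ha k (bwd ha k x) = x := by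
  rcases x with ⟨Q, hQ⟩ | ⟨⟨Q, p⟩, h1, h2⟩
  · have hmem : ({a} : Finset α) ∈ (extSingle ha Q).parts := by
      rw [parts_extSingle]; exact mem_insert_self _ _
    have hpart : (extSingle ha Q).part a = {a} :=
      (extSingle ha Q).part_eq_of_mem hmem (mem_singleton_self a)
    unfold fwd bwd
    rw [dif_pos hpart]
    congr 1
    apply Subtype.ext
    apply Finpartition.ext
    rw [restrict_parts₁ ha _ hpart, parts_extSingle, Finset.erase_insert (singleton_not_mem ha Q)]
  · have hanp : a ∉ p := fun hh => ha (Q.le h2 hh)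
    have hmem : insert a p ∈ (addPart ha Q p h2).parts := by
      rw [parts_addPart]; exact mem_insert_self _ _
    have hpart : (addPart ha Q p h2).part a = insert a p :=
      (addPart ha Q p h2).part_eq_of_mem hmem (mem_insert_self a p)
    have hne : (addPart ha Q p h2).part a ≠ {a} := by
      rw [hpart]
      intro heq
      obtain ⟨x, hx⟩ := Q.nonempty_of_mem_parts h2
      have hx' : x ∈ ({a} : Finset α) := heq ▸ mem_insert_of_mem hx
      rw [mem_singleton] at hx'
      exact hanp (hx' ▸ hx)
    unfold fwd bwd
    rw [dif_neg hne]
    congr 1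
    apply Subtype.ext
    apply Prod.ext
    · apply Finpartition.ext
      show (restrict ha (addPart ha Q p h2)).parts = Q.parts
      rw [restrict_parts₂ ha _ hne, hpart, Finset.erase_insert hanp, parts_addPart,
        Finset.erase_insert (fun hh => insert_a_not_mem_parts ha Q p (Finset.erase_subset _ _ hh)),
        Finset.insert_erase h2]
    · show ((addPart ha Q p h2).part a).erase a = p
      rw [hpart, Finset.erase_insert hanp]

/-- The key equivalence. -/
def insertEquiv (ha : a ∉ t) (k : ℕ) :
    {P : Finpartition (insert a t) // P.parts.card = k + 1} ≃
      ({Q : Finpartition t // Q.parts.card = k} ⊕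
        {x : Finpartition t × Finset α // x.1.parts.card = k + 1 ∧ x.2 ∈ x.1.parts}) :=
  ⟨fwd ha k, bwd ha k, bwd_fwd ha k, fwd_bwd ha k⟩

/-- Split off the chosen part as a sigma type. -/
def prodEquivSigma (k : ℕ) :
    {x : Finpartition t × Finset α // x.1.parts.card = k ∧ x.2 ∈ x.1.parts} ≃
      Σ Q : {Q : Finpartition t // Q.parts.card = k}, {p : Finset α // p ∈ Q.1.parts} where
  toFun x := ⟨⟨x.1.1, x.2.1⟩, ⟨x.1.2, x.2.2⟩⟩
  invFun y := ⟨(y.1.1, y.2.1), y.1.2, y.2.2⟩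
  left_inv := by rintro ⟨⟨Q, p⟩, h1, h2⟩; rfl
  right_inv := by rintro ⟨⟨Q, h1⟩, ⟨p, h2⟩⟩; rfl

noncomputable instance fintypeAux (k : ℕ) :
    Fintype {x : Finpartition t × Finset α // x.1.parts.card = k ∧ x.2 ∈ x.1.parts} :=
  Fintype.ofEquiv _ (prodEquivSigma k).symm

theorem card_insert_step (ha : a ∉ t) (k : ℕ) :
    Fintype.card {P : Finpartition (insert a t) // P.parts.card = k + 1} =
      Fintype.card {Q : Finpartition t // Q.parts.card = k} +
        (k + 1) * Fintype.card {Q : Finpartition t // Q.parts.card = k + 1} := by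
  rw [Fintype.card_congr (insertEquiv ha k), Fintype.card_sum,
    Fintype.card_congr (prodEquivSigma (k + 1)), Fintype.card_sigma]
  congr 1
  have h : ∀ Q : {Q : Finpartition t // Q.parts.card = k + 1},
      Fintype.card {p : Finset α // p ∈ Q.1.parts} = k + 1 := fun Q => by
    rw [Fintype.card_coe, Q.2]
  rw [Finset.sum_congr rfl (fun Q _ => h Q), Finset.sum_const, Finset.card_univ, smul_eq_mul,
    mul_comm]

theorem card_partitions (s : Finset α) (k : ℕ) :
    Fintype.card {P : Finpartition s // P.parts.card = k} = stirling s.card k := by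
  induction s using Finset.induction_on generalizing k with
  | empty =>
    have hparts : ∀ P : Finpartition (∅ : Finset α), P.parts = ∅ := fun P =>
      Finpartition.parts_eq_empty_iff.2 Finset.bot_eq_empty.symm
    cases k with
    | zero =>
      rw [Finset.card_empty]
      refine Fintype.card_eq_one_iff.2 ⟨⟨(Finpartition.empty (Finset α)).copy
        Finset.bot_eq_empty, by simp [Finpartition.copy, Finpartition.empty]⟩, ?_⟩
      intro y
      apply Subtype.ext
      apply Finpartition.ext
      rw [hparts, hparts]
    | succ k =>
      rw [Finset.card_empty]
      refine Fintype.card_eq_zero_iff.2 ⟨fun P => ?_⟩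
      have := P.2
      rw [hparts P.1, Finset.card_empty] at this
      omega
  | @insert a t ha ih =>
    rw [Finset.card_insert_of_notMem ha]
    cases k with
    | zero =>
      refine Fintype.card_eq_zero_iff.2 ⟨fun P => ?_⟩
      have h0 : P.1.parts = ∅ := Finset.card_eq_zero.1 P.2
      have := Finpartition.parts_eq_empty_iff.1 h0
      rw [Finset.bot_eq_empty] at this
      exact Finset.insert_ne_empty a t this
    | succ k =>
      rw [card_insert_step ha k, ih k, ih (k + 1)]
      show _ = (k + 1) * stirling t.card (k + 1) + stirling t.card k
      omega

end PartAux

namespace KBip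

open PartAux

variable {n : ℕ}

def embL (n : ℕ) : Fin n ↪ Fin n ⊕ Fin n := ⟨Sum.inl, Sum.inl_injective⟩
def embR (n : ℕ) : Fin n ↪ Fin n ⊕ Fin n := ⟨Sum.inr, Sum.inr_injective⟩

/-- Combine partitions of the two sides into one of the sum type. -/
def combine (Q R : Finpartition (univ : Finset (Fin n))) :
    Finpartition (univ : Finset (Fin n ⊕ Fin n)) where
  parts := Q.parts.image (·.map (embL n)) ∪ R.parts.image (·.map (embR n))
  supIndep := by
    rw [Finset.supIndep_iff_pairwiseDisjoint]
    intro p hp q hq hne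
    simp only [Finset.coe_union, Set.mem_union, Finset.mem_coe, Finset.mem_image] at hp hq
    simp only [Function.onFun, id_eq]
    rcases hp with ⟨p', hp', rfl⟩ | ⟨p', hp', rfl⟩ <;>
      rcases hq with ⟨q', hq', rfl⟩ | ⟨q', hq', rfl⟩
    · exact (Finset.disjoint_map (embL n)).2 <| Q.disjoint hp' hq'
        (fun h => hne (by rw [h]))
    · rw [Finset.disjoint_left]
      rintro x hx hx'
      simp only [Finset.mem_map, embL, embR, Function.Embedding.coeFn_mk] at hx hx'
      obtain ⟨y, _, rfl⟩ := hx
      obtain ⟨z, _, hz⟩ := hx'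
      exact Sum.inl_ne_inr hz.symm
    · rw [Finset.disjoint_left]
      rintro x hx hx'
      simp only [Finset.mem_map, embL, embR, Function.Embedding.coeFn_mk] at hx hx'
      obtain ⟨y, _, rfl⟩ := hx
      obtain ⟨z, _, hz⟩ := hx'
      exact Sum.inl_ne_inr hz
    · exact (Finset.disjoint_map (embR n)).2 <| R.disjoint hp' hq'
        (fun h => hne (by rw [h]))
  sup_parts := by
    rw [Finset.eq_univ_iff_forall]
    intro x
    rw [Finset.mem_sup]
    rcases x with y | y
    · obtain ⟨p, hp, hyp⟩ := Q.exists_mem (Finset.mem_univ y)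
      exact ⟨p.map (embL n), Finset.mem_union_left _ (Finset.mem_image_of_mem _ hp),
        Finset.mem_map_of_mem _ hyp⟩
    · obtain ⟨p, hp, hyp⟩ := R.exists_mem (Finset.mem_univ y)
      exact ⟨p.map (embR n), Finset.mem_union_right _ (Finset.mem_image_of_mem _ hp),
        Finset.mem_map_of_mem _ hyp⟩
  bot_notMem := by
    rw [Finset.mem_union]
    rintro (h | h)
    · obtain ⟨p', hp', heq⟩ := Finset.mem_image.1 h
      rw [Finset.bot_eq_empty, Finset.map_eq_empty] at heq
      rw [heq] at hp'
      exact Q.bot_notMem hp'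
    · obtain ⟨p', hp', heq⟩ := Finset.mem_image.1 h
      rw [Finset.bot_eq_empty, Finset.map_eq_empty] at heq
      rw [heq] at hp'
      exact R.bot_notMem hp'

lemma card_combine (Q R : Finpartition (univ : Finset (Fin n))) :
    (combine Q R).parts.card = Q.parts.card + R.parts.card := by
  show (Q.parts.image (·.map (embL n)) ∪ R.parts.image (·.map (embR n))).card = _
  rw [Finset.card_union_of_disjoint, Finset.card_image_of_injective _ (Finset.map_injective _),
    Finset.card_image_of_injective _ (Finset.map_injective _)]
  rw [Finset.disjoint_left]
  rintro p hp hq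
  obtain ⟨p', hp', rfl⟩ := Finset.mem_image.1 hp
  obtain ⟨q', hq', heq⟩ := Finset.mem_image.1 hq
  obtain ⟨y, hy⟩ := Q.nonempty_of_mem_parts hp'
  have hmem : (embL n) y ∈ q'.map (embR n) := heq ▸ Finset.mem_map_of_mem _ hy
  obtain ⟨w, _, hw⟩ := Finset.mem_map.1 hmem
  exact absurd hw (by simp [embL, embR])

lemma mem_combine_left (Q R : Finpartition (univ : Finset (Fin n))) (p : Finset (Fin n)) :
    p.map (embL n) ∈ (combine Q R).parts ↔ p ∈ Q.parts := by
  constructor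
  · intro h
    rcases Finset.mem_union.1 h with h' | h'
    · obtain ⟨q, hq, heq⟩ := Finset.mem_image.1 h'
      rwa [← Finset.map_injective (embL n) heq]
    · obtain ⟨q, hq, heq⟩ := Finset.mem_image.1 h'
      obtain ⟨z, hz⟩ := R.nonempty_of_mem_parts hq
      have : (embR n) z ∈ p.map (embL n) := heq ▸ Finset.mem_map_of_mem _ hz
      obtain ⟨w, _, hw⟩ := Finset.mem_map.1 this
      exact absurd hw (by simp [embL, embR])
  · intro h
    exact Finset.mem_union_left _ (Finset.mem_image_of_mem _ h)

lemma mem_combine_right (Q R : Finpartition (univ : Finset (Fin n))) (p : Finset (Fin n)) :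
    p.map (embR n) ∈ (combine Q R).parts ↔ p ∈ R.parts := by
  constructor
  · intro h
    rcases Finset.mem_union.1 h with h' | h'
    · obtain ⟨q, hq, heq⟩ := Finset.mem_image.1 h'
      obtain ⟨z, hz⟩ := Q.nonempty_of_mem_parts hq
      have : (embL n) z ∈ p.map (embR n) := heq ▸ Finset.mem_map_of_mem _ hz
      obtain ⟨w, _, hw⟩ := Finset.mem_map.1 this
      exact absurd hw (by simp [embL, embR])
    · obtain ⟨q, hq, heq⟩ := Finset.mem_image.1 h'
      rwa [← Finset.map_injective (embR n) heq]
  · intro h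
    exact Finset.mem_union_right _ (Finset.mem_image_of_mem _ h)

/-- Properness of a partition: parts are independent sets. -/
def Proper (P : Finpartition (univ : Finset (Fin n ⊕ Fin n))) : Prop :=
  ∀ p ∈ P.parts, ∀ a ∈ p, ∀ b ∈ p, ¬ (completeBipartiteGraph (Fin n) (Fin n)).Adj a b

lemma combine_proper (Q R : Finpartition (univ : Finset (Fin n))) : Proper (combine Q R) := by
  intro p hp a ha b hb
  rcases Finset.mem_union.1 hp with h' | h' <;> obtain ⟨q, hq, rfl⟩ := Finset.mem_image.1 h'
  · obtain ⟨y, _, rfl⟩ := Finset.mem_map.1 ha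
    obtain ⟨z, _, rfl⟩ := Finset.mem_map.1 hb
    simp [embL]
  · obtain ⟨y, _, rfl⟩ := Finset.mem_map.1 ha
    obtain ⟨z, _, rfl⟩ := Finset.mem_map.1 hb
    simp [embR]

end KBip

namespace KBip

variable {n : ℕ}

lemma part_sides {P : Finpartition (univ : Finset (Fin n ⊕ Fin n))} (h : Proper P)
    {p : Finset (Fin n ⊕ Fin n)} (hp : p ∈ P.parts) :
    (∀ x ∈ p, x.isLeft) ∨ (∀ x ∈ p, x.isRight) := by
  by_contra hc
  push_neg at hc
  obtain ⟨⟨x, hx, hxL⟩, ⟨y, hy, hyR⟩⟩ := hc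
  have hxR : x.isRight := by cases x <;> simp_all
  have hyL : y.isLeft := by cases y <;> simp_all
  exact h p hp y hy x hx (Or.inl ⟨hyL, hxR⟩)

lemma map_preimage_left {p : Finset (Fin n ⊕ Fin n)} (hall : ∀ x ∈ p, x.isLeft) :
    (p.preimage Sum.inl Sum.inl_injective.injOn).map (embL n) = p := by
  ext x
  simp only [Finset.mem_map, Finset.mem_preimage, embL, Function.Embedding.coeFn_mk]
  constructor
  · rintro ⟨y, hy, rfl⟩; exact hy
  · intro hx
    obtain ⟨y, rfl⟩ := Sum.isLeft_iff.1 (hall x hx)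
    exact ⟨y, hx, rfl⟩

lemma map_preimage_right {p : Finset (Fin n ⊕ Fin n)} (hall : ∀ x ∈ p, x.isRight) :
    (p.preimage Sum.inr Sum.inr_injective.injOn).map (embR n) = p := by
  ext x
  simp only [Finset.mem_map, Finset.mem_preimage, embR, Function.Embedding.coeFn_mk]
  constructor
  · rintro ⟨y, hy, rfl⟩; exact hy
  · intro hx
    obtain ⟨y, rfl⟩ := Sum.isRight_iff.1 (hall x hx)
    exact ⟨y, hx, rfl⟩

/-- The left side of a proper partition. -/
noncomputable def splitL (P : Finpartition (univ : Finset (Fin n ⊕ Fin n))) (h : Proper P) :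
    Finpartition (univ : Finset (Fin n)) where
  parts := (P.parts.filter fun p => ∀ x ∈ p, x.isLeft).image
    fun p => p.preimage Sum.inl Sum.inl_injective.injOn
  supIndep := by
    rw [Finset.supIndep_iff_pairwiseDisjoint]
    intro p hp q hq hne
    simp only [Finset.coe_image, Set.mem_image, Finset.mem_coe, Finset.mem_filter] at hp hq
    obtain ⟨d, ⟨hd, _⟩, rfl⟩ := hp
    obtain ⟨e, ⟨he, _⟩, rfl⟩ := hq
    simp only [Function.onFun, id_eq]
    rw [Finset.disjoint_left]
    intro y hy hy'
    rw [Finset.mem_preimage] at hy hy'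
    exact hne (by rw [P.eq_of_mem_parts hd he hy hy'])
  sup_parts := by
    rw [Finset.eq_univ_iff_forall]
    intro y
    rw [Finset.mem_sup]
    obtain ⟨d, hd, hyd⟩ := P.exists_mem (Finset.mem_univ (Sum.inl y))
    have hall : ∀ x ∈ d, x.isLeft := by
      rcases part_sides h hd with h' | h'
      · exact h'
      · exact absurd (h' _ hyd) (by simp)
    exact ⟨d.preimage Sum.inl Sum.inl_injective.injOn,
      Finset.mem_image_of_mem _ (Finset.mem_filter.2 ⟨hd, hall⟩),
      Finset.mem_preimage.2 hyd⟩
  bot_notMem := by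
    intro h'
    obtain ⟨d, hd, heq⟩ := Finset.mem_image.1 h'
    rw [Finset.mem_filter] at hd
    obtain ⟨x, hx⟩ := P.nonempty_of_mem_parts hd.1
    obtain ⟨y, rfl⟩ := Sum.isLeft_iff.1 (hd.2 x hx)
    have : y ∈ d.preimage Sum.inl Sum.inl_injective.injOn := Finset.mem_preimage.2 hx
    rw [heq] at this
    exact Finset.notMem_empty y this

/-- The right side of a proper partition. -/
noncomputable def splitR (P : Finpartition (univ : Finset (Fin n ⊕ Fin n))) (h : Proper P) :
    Finpartition (univ : Finset (Fin n)) where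
  parts := (P.parts.filter fun p => ∀ x ∈ p, x.isRight).image
    fun p => p.preimage Sum.inr Sum.inr_injective.injOn
  supIndep := by
    rw [Finset.supIndep_iff_pairwiseDisjoint]
    intro p hp q hq hne
    simp only [Finset.coe_image, Set.mem_image, Finset.mem_coe, Finset.mem_filter] at hp hq
    obtain ⟨d, ⟨hd, _⟩, rfl⟩ := hp
    obtain ⟨e, ⟨he, _⟩, rfl⟩ := hq
    simp only [Function.onFun, id_eq]
    rw [Finset.disjoint_left]
    intro y hy hy'
    rw [Finset.mem_preimage] at hy hy'
    exact hne (by rw [P.eq_of_mem_parts hd he hy hy'])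
  sup_parts := by
    rw [Finset.eq_univ_iff_forall]
    intro y
    rw [Finset.mem_sup]
    obtain ⟨d, hd, hyd⟩ := P.exists_mem (Finset.mem_univ (Sum.inr y))
    have hall : ∀ x ∈ d, x.isRight := by
      rcases part_sides h hd with h' | h'
      · exact absurd (h' _ hyd) (by simp)
      · exact h'
    exact ⟨d.preimage Sum.inr Sum.inr_injective.injOn,
      Finset.mem_image_of_mem _ (Finset.mem_filter.2 ⟨hd, hall⟩),
      Finset.mem_preimage.2 hyd⟩
  bot_notMem := by
    intro h'
    obtain ⟨d, hd, heq⟩ := Finset.mem_image.1 h'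
    rw [Finset.mem_filter] at hd
    obtain ⟨x, hx⟩ := P.nonempty_of_mem_parts hd.1
    obtain ⟨y, rfl⟩ := Sum.isRight_iff.1 (hd.2 x hx)
    have : y ∈ d.preimage Sum.inr Sum.inr_injective.injOn := Finset.mem_preimage.2 hx
    rw [heq] at this
    exact Finset.notMem_empty y this

lemma combine_split (P : Finpartition (univ : Finset (Fin n ⊕ Fin n))) (h : Proper P) :
    combine (splitL P h) (splitR P h) = P := by
  apply Finpartition.ext
  ext p
  constructor
  · intro hp
    rcases Finset.mem_union.1 hp with h' | h' <;> obtain ⟨q, hq, rfl⟩ := Finset.mem_image.1 h'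
    · obtain ⟨d, hd, rfl⟩ := Finset.mem_image.1 hq
      rw [Finset.mem_filter] at hd
      rw [map_preimage_left hd.2]
      exact hd.1
    · obtain ⟨d, hd, rfl⟩ := Finset.mem_image.1 hq
      rw [Finset.mem_filter] at hd
      rw [map_preimage_right hd.2]
      exact hd.1
  · intro hp
    rcases part_sides h hp with hall | hall
    · refine Finset.mem_union_left _ (Finset.mem_image.2
        ⟨p.preimage Sum.inl Sum.inl_injective.injOn,
          Finset.mem_image_of_mem _ (Finset.mem_filter.2 ⟨hp, hall⟩), map_preimage_left hall⟩)
    · refine Finset.mem_union_right _ (Finset.mem_image.2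
        ⟨p.preimage Sum.inr Sum.inr_injective.injOn,
          Finset.mem_image_of_mem _ (Finset.mem_filter.2 ⟨hp, hall⟩), map_preimage_right hall⟩)

/-- The combining map, as a map of subtypes. -/
def g (n : ℕ) (x : {x : Finpartition (univ : Finset (Fin n)) × Finpartition (univ : Finset (Fin n)) //
      x.1.parts.card + x.2.parts.card = 4}) :
    {P : Finpartition (univ : Finset (Fin n ⊕ Fin n)) // Proper P ∧ P.parts.card = 4} :=
  ⟨combine x.1.1 x.1.2, combine_proper _ _, by rw [card_combine]; exact x.2⟩

lemma g_bijective (n : ℕ) : Function.Bijective (g n) := by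
  constructor
  · rintro ⟨⟨Q, R⟩, hx⟩ ⟨⟨Q', R'⟩, hy⟩ hg
    have hc : combine Q R = combine Q' R' := Subtype.ext_iff.1 hg
    apply Subtype.ext
    have hQ : Q = Q' := by
      apply Finpartition.ext
      ext p
      rw [← mem_combine_left Q R p, ← mem_combine_left Q' R' p, hc]
    have hR : R = R' := by
      apply Finpartition.ext
      ext p
      rw [← mem_combine_right Q R p, ← mem_combine_right Q' R' p, hc]
    rw [Prod.ext_iff]
    exact ⟨hQ, hR⟩
  · rintro ⟨P, hprop, hcard⟩
    have hcc := card_combine (splitL P hprop) (splitR P hprop)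
    rw [combine_split P hprop, hcard] at hcc
    exact ⟨⟨(splitL P hprop, splitR P hprop), hcc.symm⟩,
      Subtype.ext (combine_split P hprop)⟩

end KBip

namespace KBip

theorem card_pairs {n : ℕ} (hn : 1 ≤ n) :
    Fintype.card {x : Finpartition (univ : Finset (Fin n)) × Finpartition (univ : Finset (Fin n)) //
      x.1.parts.card + x.2.parts.card = 4} =
    ∑ j ∈ Finset.Icc 1 3, stirling n j * stirling n (4 - j) := by
  haveI : Nonempty (Fin n) := Fin.pos_iff_nonempty.1 hn
  have hne : (univ : Finset (Fin n)) ≠ ⊥ := by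
    rw [Finset.bot_eq_empty]
    exact Finset.univ_nonempty.ne_empty
  have hpos : ∀ Q : Finpartition (univ : Finset (Fin n)), 1 ≤ Q.parts.card := fun Q =>
    Finset.card_pos.2 (Q.parts_nonempty hne)
  rw [Fintype.card_subtype]
  have hsplit : (univ.filter fun x :
        Finpartition (univ : Finset (Fin n)) × Finpartition (univ : Finset (Fin n)) =>
        x.1.parts.card + x.2.parts.card = 4)
      = (Finset.Icc 1 3).biUnion (fun j =>
          (univ.filter fun Q : Finpartition (univ : Finset (Fin n)) => Q.parts.card = j) ×ˢ
          (univ.filter fun Q : Finpartition (univ : Finset (Fin n)) => Q.parts.card = 4 - j)) := by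
    ext x
    simp only [Finset.mem_filter, Finset.mem_univ, true_and, Finset.mem_biUnion,
      Finset.mem_Icc, Finset.mem_product]
    constructor
    · intro h4
      exact ⟨x.1.parts.card, ⟨hpos x.1, by have := hpos x.2; omega⟩, rfl, by omega⟩
    · rintro ⟨j, ⟨h1, h3⟩, hj1, hj2⟩
      omega
  rw [hsplit, Finset.card_biUnion]
  · apply Finset.sum_congr rfl
    intro j _
    rw [Finset.card_product]
    congr 1
    · rw [← Fintype.card_subtype, PartAux.card_partitions, Finset.card_fin]
    · rw [← Fintype.card_subtype, PartAux.card_partitions, Finset.card_fin]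
  · intro i _ j _ hij
    rw [Function.onFun, Finset.disjoint_left]
    rintro x hx hx'
    rw [Finset.mem_product, Finset.mem_filter] at hx hx'
    exact hij (hx.1.2.symm ▸ hx'.1.2)

end KBip

namespace StirlingArith

lemma stirling_succ (m k : ℕ) :
    stirling (m + 1) (k + 1) = (k + 1) * stirling m (k + 1) + stirling m k := rfl

lemma stirling_zero_right (m : ℕ) : stirling (m + 1) 0 = 0 := rfl

lemma stirling_one (m : ℕ) : stirling (m + 1) 1 = 1 := by
  induction m with
  | zero => rfl
  | succ m ih => rw [stirling_succ, ih, stirling_zero_right]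

lemma stirling_two (m : ℕ) : (stirling (m + 1) 2 : ℤ) = 2 ^ m - 1 := by
  induction m with
  | zero => show ((2 * stirling 0 2 + stirling 0 1 : ℕ) : ℤ) = _; norm_num [stirling]
  | succ m ih =>
    rw [stirling_succ]
    push_cast
    rw [ih, stirling_one]
    push_cast
    ring

lemma stirling_three (m : ℕ) : 2 * (stirling (m + 1) 3 : ℤ) = 3 ^ m - 2 ^ (m + 1) + 1 := by
  induction m with
  | zero => show 2 * ((3 * stirling 0 3 + stirling 0 2 : ℕ) : ℤ) = _; norm_num [stirling]
  | succ m ih =>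
    rw [stirling_succ]
    push_cast
    have h2 := stirling_two m
    linear_combination 3 * ih + 2 * h2

end StirlingArith

theorem partitions_completeBipartite_four (n : ℕ) (hn : 1 ≤ n) :
    (Nat.card {P : Finpartition (Finset.univ : Finset (Fin n ⊕ Fin n)) //
        (∀ p ∈ P.parts, ∀ a ∈ p, ∀ b ∈ p,
          ¬ (completeBipartiteGraph (Fin n) (Fin n)).Adj a b) ∧
        P.parts.card = 4} : ℤ) =
      2 - 2 ^ (n + 1) + 3 ^ (n - 1) + 4 ^ (n - 1) ∧
    (∑ j ∈ Finset.Icc 1 3, (stirling n j : ℤ) * stirling n (4 - j)) =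
      2 - 2 ^ (n + 1) + 3 ^ (n - 1) + 4 ^ (n - 1) := by
  obtain ⟨m, rfl⟩ : ∃ m, n = m + 1 := ⟨n - 1, (Nat.succ_pred_eq_of_pos hn).symm⟩
  rw [Nat.add_sub_cancel]
  have h1 : (stirling (m + 1) 1 : ℤ) = 1 := by exact_mod_cast StirlingArith.stirling_one m
  have h2 := StirlingArith.stirling_two m
  have h3 := StirlingArith.stirling_three m
  have h4 : (4 : ℤ) ^ m = 2 ^ m * 2 ^ m := by rw [← mul_pow]; norm_num
  have hsum : (∑ j ∈ Finset.Icc 1 3, (stirling (m + 1) j : ℤ) * stirling (m + 1) (4 - j)) =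
      2 - 2 ^ (m + 1 + 1) + 3 ^ m + 4 ^ m := by
    have hIcc : (Finset.Icc 1 3 : Finset ℕ) = {1, 2, 3} := by decide
    rw [hIcc, Finset.sum_insert (by decide), Finset.sum_insert (by decide),
      Finset.sum_singleton]
    show (stirling (m + 1) 1 : ℤ) * stirling (m + 1) 3 +
        ((stirling (m + 1) 2 : ℤ) * stirling (m + 1) 2 +
          (stirling (m + 1) 3 : ℤ) * stirling (m + 1) 1) = _
    rw [h1]
    linear_combination h3 + ((stirling (m + 1) 2 : ℤ) + 2 ^ m - 1) * h2 - h4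
  refine ⟨?_, hsum⟩
  have hcard : Nat.card {P : Finpartition (Finset.univ : Finset (Fin (m + 1) ⊕ Fin (m + 1))) //
        (∀ p ∈ P.parts, ∀ a ∈ p, ∀ b ∈ p,
          ¬ (completeBipartiteGraph (Fin (m + 1)) (Fin (m + 1))).Adj a b) ∧
        P.parts.card = 4} =
      ∑ j ∈ Finset.Icc 1 3, stirling (m + 1) j * stirling (m + 1) (4 - j) := by
    show Nat.card {P : Finpartition (Finset.univ : Finset (Fin (m + 1) ⊕ Fin (m + 1))) //
        KBip.Proper P ∧ P.parts.card = 4} = _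
    rw [← Nat.card_congr (Equiv.ofBijective _ (KBip.g_bijective (m + 1))),
      Nat.card_eq_fintype_card, KBip.card_pairs (Nat.succ_le_succ (Nat.zero_le m))]
  rw [hcard]
  push_cast
  exact hsum
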